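/- Every ascending chain S_1 ≤ S_2 ≤ S_3 ≤ ⋯ of additive subsemigroups of ℕ is stationary: there exists p ≥ 1 such that S_n = S_p for all n ≥ p. In particular, the additive semigroup ℕ belongs to Tak(𝒮). -/

import Mathlib

/-- Auxiliary: a subsemigroup of ℕ containing `a` and `y` contains `y + a * k`. -/
lemma aux_add_mul_mem (T : AddSubsemigroup ℕ) {a y : ℕ} (ha : a ∈ T) (hy : y ∈ T) :
    ∀ k : ℕ, y + a * k ∈ T := by
  intro k
  induction k with
  | zero => simpa using hy
  | succ k ih =>
      have : (y + a * k) + a ∈ T := T.add_mem ih ha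
      have he : y + a * (k + 1) = (y + a * k) + a := by ring
      rwa [he]

/-- every ascending chain of additive subsemigroups of ℕ is
stationary (in particular ℕ ∈ Tak(𝒮), with no rank bound needed at all). -/
theorem stmt_2 (S : ℕ → AddSubsemigroup ℕ) (hmono : Monotone S) :
    ∃ p, ∀ n, p ≤ n → S n = S p := by
  classical
  by_cases hpos : ∃ N, ∃ a ∈ S N, 0 < a
  · obtain ⟨N, a, haN, ha⟩ := hpos
    -- the set of elements of `S (N + n)` in residue class `r` mod `a`
    set A : ℕ → Fin a → Set ℕ := fun n r => {x | x ∈ S (N + n) ∧ x % a = (r : ℕ)} with hA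
    -- `f n r` : minimal element of `A n r`, or ⊤
    set f : ℕ → Fin a → ℕ∞ := fun n r =>
      if h : (A n r).Nonempty then ((sInf (A n r) : ℕ) : ℕ∞) else ⊤ with hf
    have hAmono : ∀ {m n : ℕ}, m ≤ n → ∀ r, A m r ⊆ A n r := by
      intro m n hmn r x hx
      exact ⟨hmono (by omega) hx.1, hx.2⟩
    have hfanti : ∀ {m n : ℕ}, m ≤ n → ∀ r, f n r ≤ f m r := by
      intro m n hmn r
      by_cases h : (A m r).Nonempty
      · have h' : (A n r).Nonempty := h.mono (hAmono hmn r)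
        simp only [hf, dif_pos h, dif_pos h']
        have : sInf (A n r) ≤ sInf (A m r) :=
          Nat.sInf_le (hAmono hmn r (Nat.sInf_mem h))
        exact_mod_cast this
      · simp only [hf, dif_neg h]
        exact le_top
    -- the antitone function `f` into a well-founded order stabilizes
    have hwf : WellFounded ((· > ·) : (Fin a → ℕ∞)ᵒᵈ → (Fin a → ℕ∞)ᵒᵈ → Prop) :=
      (wellFounded_lt : WellFounded ((· < ·) : (Fin a → ℕ∞) → (Fin a → ℕ∞) → Prop))
    obtain ⟨k, hk⟩ := (wellFoundedGT_iff_monotone_chain_condition (α := (Fin a → ℕ∞)ᵒᵈ)).mp ⟨hwf⟩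
      ⟨fun n => (f n : (Fin a → ℕ∞)ᵒᵈ), fun m n hmn => by
        intro r; exact hfanti hmn r⟩
    refine ⟨N + k, ?_⟩
    intro n hn
    refine le_antisymm ?_ (hmono hn)
    intro x hx
    -- x ∈ S n; let r be its residue class
    have hr : x % a < a := Nat.mod_lt _ ha
    set r : Fin a := ⟨x % a, hr⟩ with hrdef
    have hxA : x ∈ A (n - N) r := ⟨by rwa [show N + (n - N) = n by omega], rfl⟩
    have hfk : f (n - N) r = f k r := by
      have := hk (n - N) (by omega)
      exact (congrFun this r).symm
    have hne : (A (n - N) r).Nonempty := ⟨x, hxA⟩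
    have hnek : (A k r).Nonempty := by
      by_contra hcon
      rw [hf] at hfk
      simp only [dif_pos hne, dif_neg hcon] at hfk
      exact (ENat.coe_ne_top _) hfk
    have hsInfeq : sInf (A k r) = sInf (A (n - N) r) := by
      rw [hf] at hfk
      simp only [dif_pos hne, dif_pos hnek] at hfk
      exact_mod_cast hfk.symm
    set y := sInf (A k r) with hy
    have hyA : y ∈ A k r := Nat.sInf_mem hnek
    have hyle : y ≤ x := by
      exact le_trans (le_of_eq hsInfeq) (Nat.sInf_le hxA)
    have hmod : y % a = x % a := by
      have := hyA.2
      simp [hrdef] at this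
      omega
    -- a ∣ x - y
    have hdvd : a ∣ x - y := by
      have : y ≡ x [MOD a] := hmod
      exact (Nat.modEq_iff_dvd' hyle).mp this
    obtain ⟨c, hc⟩ := hdvd
    have hxe : x = y + a * c := by omega
    have hyS : y ∈ S (N + k) := hyA.1
    have haS : a ∈ S (N + k) := hmono (by omega) haN
    rw [hxe]
    exact aux_add_mul_mem _ haS hyS c
  · push_neg at hpos
    -- every S n is contained in {0}
    have hzero : ∀ n x, x ∈ S n → x = 0 := by
      intro n x hx
      by_contra hne
      exact absurd (Nat.pos_of_ne_zero hne) (by simpa using hpos n x hx)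
    by_cases h0 : ∃ N, (0 : ℕ) ∈ S N
    · obtain ⟨N, hN⟩ := h0
      refine ⟨N, fun n hn => ?_⟩
      ext x
      constructor
      · intro hx
        rw [hzero n x hx]; exact hN
      · intro hx; exact hmono hn hx
    · push_neg at h0
      refine ⟨0, fun n _ => ?_⟩
      ext x
      constructor
      · intro hx
        exact absurd (hzero n x hx ▸ hx) (h0 n)
      · intro hx
        exact absurd (hzero 0 x hx ▸ hx) (h0 0)
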